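/- For d ≥ 2, the inconsistently monotone grid number satisfies the recursion M'_d(n) ≤ C(M'_{d-1}(n), n)^(d-1) · n^(2^(n^(d-1))), where C(a,b) is the binomial coefficient. That is, every injective d-dimensional array indexed by [m]^(d-1) × [N], with m = M'_{d-1}(n) and N = C(m,n)^(d-1) · n^(2^(n^(d-1))), contains an inconsistently monotone subarray of size n × ... × n. -/

import Mathlib

def SMonoOn {N : ℕ} (g : Fin N → ℝ) (T : Finset (Fin N)) : Prop :=
  (∀ u ∈ T, ∀ v ∈ T, u < v → g u < g v) ∨ (∀ u ∈ T, ∀ v ∈ T, u < v → g v < g u)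

lemma SMonoOn.subset {N : ℕ} {g : Fin N → ℝ} {T T' : Finset (Fin N)} (h : SMonoOn g T)
    (hsub : T' ⊆ T) : SMonoOn g T' := by
  rcases h with h | h
  · exact Or.inl fun u hu v hv huv => h u (hsub hu) v (hsub hv) huv
  · exact Or.inr fun u hu v hv huv => h u (hsub hu) v (hsub hv) huv

lemma erdos_szekeres {N a : ℕ} (g : Fin N → ℝ) (H : Finset (Fin N))
    (hg : ∀ u ∈ H, ∀ v ∈ H, u ≠ v → g u ≠ g v) (hH : a ^ 2 ≤ H.card) :
    ∃ T ⊆ H, T.card = a ∧ SMonoOn g T := by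
  classical
  rcases Nat.eq_zero_or_pos a with rfl | ha
  · exact ⟨∅, Finset.empty_subset _, Finset.card_empty, Or.inl (by simp)⟩
  rcases Nat.lt_or_ge a 2 with ha2 | ha2
  · have ha1 : a = 1 := by omega
    subst ha1
    obtain ⟨h0, hh0⟩ := Finset.card_pos.1 (by omega : 0 < H.card)
    refine ⟨{h0}, Finset.singleton_subset_iff.2 hh0, Finset.card_singleton _, Or.inl ?_⟩
    intro u hu v hv huv
    simp only [Finset.mem_singleton] at hu hv
    subst hu; subst hv; exact absurd huv (lt_irrefl _)
  suffices hbig : ∃ T ⊆ H, a ≤ T.card ∧ SMonoOn g T by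
    obtain ⟨T, hTH, hTa, hTm⟩ := hbig
    obtain ⟨T', hT'T, hT'⟩ := Finset.exists_subset_card_eq hTa
    exact ⟨T', hT'T.trans hTH, hT', hTm.subset hT'T⟩
  by_contra hcon
  push_neg at hcon
  set IncF : Fin N → Finset (Finset (Fin N)) := fun h =>
    H.powerset.filter (fun T => h ∈ T ∧ (∀ u ∈ T, u ≤ h) ∧
      ∀ u ∈ T, ∀ v ∈ T, u < v → g u < g v) with hIncF
  set DecF : Fin N → Finset (Finset (Fin N)) := fun h =>
    H.powerset.filter (fun T => h ∈ T ∧ (∀ u ∈ T, u ≤ h) ∧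
      ∀ u ∈ T, ∀ v ∈ T, u < v → g v < g u) with hDecF
  have hsingI : ∀ h ∈ H, {h} ∈ IncF h := by
    intro h hh
    rw [hIncF]
    refine Finset.mem_filter.2 ⟨Finset.mem_powerset.2 (Finset.singleton_subset_iff.2 hh),
      Finset.mem_singleton_self h, ?_, ?_⟩
    · intro u hu; rw [Finset.mem_singleton] at hu; exact le_of_eq hu
    · intro u hu v hv huv
      rw [Finset.mem_singleton] at hu hv
      subst hu; subst hv; exact absurd huv (lt_irrefl _)
  have hsingD : ∀ h ∈ H, {h} ∈ DecF h := by
    intro h hh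
    rw [hDecF]
    refine Finset.mem_filter.2 ⟨Finset.mem_powerset.2 (Finset.singleton_subset_iff.2 hh),
      Finset.mem_singleton_self h, ?_, ?_⟩
    · intro u hu; rw [Finset.mem_singleton] at hu; exact le_of_eq hu
    · intro u hu v hv huv
      rw [Finset.mem_singleton] at hu hv
      subst hu; subst hv; exact absurd huv (lt_irrefl _)
  have hiL1 : ∀ h ∈ H, 1 ≤ (IncF h).sup Finset.card := by
    intro h hh
    have := Finset.le_sup (f := Finset.card) (hsingI h hh)
    rwa [Finset.card_singleton] at this
  have hdL1 : ∀ h ∈ H, 1 ≤ (DecF h).sup Finset.card := by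
    intro h hh
    have := Finset.le_sup (f := Finset.card) (hsingD h hh)
    rwa [Finset.card_singleton] at this
  have hiLa : ∀ h ∈ H, (IncF h).sup Finset.card ≤ a - 1 := by
    intro h hh
    apply Finset.sup_le
    intro T hT
    rw [hIncF, Finset.mem_filter, Finset.mem_powerset] at hT
    have hnot : ¬ (a ≤ T.card) := fun hle => hcon T hT.1 hle (Or.inl hT.2.2.2)
    omega
  have hdLa : ∀ h ∈ H, (DecF h).sup Finset.card ≤ a - 1 := by
    intro h hh
    apply Finset.sup_le
    intro T hT
    rw [hDecF, Finset.mem_filter, Finset.mem_powerset] at hT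
    have hnot : ¬ (a ≤ T.card) := fun hle => hcon T hT.1 hle (Or.inr hT.2.2.2)
    omega
  have hstepI : ∀ u ∈ H, ∀ v ∈ H, u < v → g u < g v →
      (IncF u).sup Finset.card < (IncF v).sup Finset.card := by
    intro u hu v hv huv hguv
    obtain ⟨T, hT, hTcard⟩ := Finset.exists_mem_eq_sup (IncF u) ⟨{u}, hsingI u hu⟩ Finset.card
    rw [hIncF, Finset.mem_filter, Finset.mem_powerset] at hT
    obtain ⟨hTH, huT, hTle, hTinc⟩ := hT
    have hvT : v ∉ T := fun hvT => absurd huv (not_lt.2 (hTle v hvT))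
    have hmem : insert v T ∈ IncF v := by
      rw [hIncF]
      refine Finset.mem_filter.2 ⟨Finset.mem_powerset.2 (Finset.insert_subset hv hTH),
        Finset.mem_insert_self _ _, ?_, ?_⟩
      · intro w hw
        rcases Finset.mem_insert.1 hw with h1 | h1
        · exact le_of_eq h1
        · exact le_trans (hTle w h1) (le_of_lt huv)
      · intro w hw w' hw' hww'
        rcases Finset.mem_insert.1 hw' with h1 | h1
        · subst h1
          rcases Finset.mem_insert.1 hw with h2 | h2
          · rw [h2] at hww'; exact absurd hww' (lt_irrefl _)
          · rcases eq_or_lt_of_le (hTle w h2) with h3 | h3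
            · rw [h3]; exact hguv
            · exact lt_trans (hTinc w h2 u huT h3) hguv
        · rcases Finset.mem_insert.1 hw with h2 | h2
          · subst h2
            exact absurd hww' (not_lt.2 (le_trans (hTle w' h1) (le_of_lt huv)))
          · exact hTinc w h2 w' h1 hww'
    have hle := Finset.le_sup (f := Finset.card) hmem
    rw [Finset.card_insert_of_notMem hvT] at hle
    omega
  have hstepD : ∀ u ∈ H, ∀ v ∈ H, u < v → g v < g u →
      (DecF u).sup Finset.card < (DecF v).sup Finset.card := by
    intro u hu v hv huv hguv
    obtain ⟨T, hT, hTcard⟩ := Finset.exists_mem_eq_sup (DecF u) ⟨{u}, hsingD u hu⟩ Finset.card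
    rw [hDecF, Finset.mem_filter, Finset.mem_powerset] at hT
    obtain ⟨hTH, huT, hTle, hTdec⟩ := hT
    have hvT : v ∉ T := fun hvT => absurd huv (not_lt.2 (hTle v hvT))
    have hmem : insert v T ∈ DecF v := by
      rw [hDecF]
      refine Finset.mem_filter.2 ⟨Finset.mem_powerset.2 (Finset.insert_subset hv hTH),
        Finset.mem_insert_self _ _, ?_, ?_⟩
      · intro w hw
        rcases Finset.mem_insert.1 hw with h1 | h1
        · exact le_of_eq h1
        · exact le_trans (hTle w h1) (le_of_lt huv)
      · intro w hw w' hw' hww'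
        rcases Finset.mem_insert.1 hw' with h1 | h1
        · subst h1
          rcases Finset.mem_insert.1 hw with h2 | h2
          · rw [h2] at hww'; exact absurd hww' (lt_irrefl _)
          · rcases eq_or_lt_of_le (hTle w h2) with h3 | h3
            · rw [h3]; exact hguv
            · exact lt_trans hguv (hTdec w h2 u huT h3)
        · rcases Finset.mem_insert.1 hw with h2 | h2
          · subst h2
            exact absurd hww' (not_lt.2 (le_trans (hTle w' h1) (le_of_lt huv)))
          · exact hTdec w h2 w' h1 hww'
    have hle := Finset.le_sup (f := Finset.card) hmem
    rw [Finset.card_insert_of_notMem hvT] at hle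
    omega
  have hcard : H.card ≤ ((Finset.range (a - 1)) ×ˢ (Finset.range (a - 1))).card := by
    apply Finset.card_le_card_of_injOn
      (fun h => ((IncF h).sup Finset.card - 1, (DecF h).sup Finset.card - 1))
    · intro h hh
      simp only [Finset.mem_coe, Finset.mem_product, Finset.mem_range]
      have := hiL1 h hh; have := hiLa h hh; have := hdL1 h hh; have := hdLa h hh
      omega
    · intro u hu v hv huv
      by_contra hne
      have hgne : g u ≠ g v := hg u hu v hv hne
      have h1 : (IncF u).sup Finset.card - 1 = (IncF v).sup Finset.card - 1 :=
        congrArg Prod.fst huv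
      have h2 : (DecF u).sup Finset.card - 1 = (DecF v).sup Finset.card - 1 :=
        congrArg Prod.snd huv
      have hi1 := hiL1 u hu; have hi2 := hiL1 v hv
      have hd1 := hdL1 u hu; have hd2 := hdL1 v hv
      rcases lt_trichotomy u v with huv' | heq | huv'
      · rcases lt_or_gt_of_ne hgne with hg' | hg'
        · have := hstepI u hu v hv huv' hg'; omega
        · have := hstepD u hu v hv huv' hg'; omega
      · exact hne heq
      · rcases lt_or_gt_of_ne hgne.symm with hg' | hg'
        · have := hstepI v hv u hu huv' hg'; omega
        · have := hstepD v hv u hu huv' hg'; omega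
  rw [Finset.card_product, Finset.card_range] at hcard
  have hsq : a ^ 2 = a * a := sq a
  have hlt : (a - 1) * (a - 1) < a * a :=
    Nat.mul_lt_mul'' (by omega) (by omega)
  omega

lemma multi_es {N n : ℕ} {α : Type} [DecidableEq α] (P : Finset α) (g : α → Fin N → ℝ)
    (hg : ∀ x, ∀ u v : Fin N, u ≠ v → g x u ≠ g x v) (H : Finset (Fin N))
    (hH : n ^ 2 ^ P.card ≤ H.card) :
    ∃ B ⊆ H, B.card = n ∧ ∀ x ∈ P, SMonoOn (g x) B := by
  classical
  induction P using Finset.cons_induction generalizing H with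
  | empty =>
      simp only [Finset.card_empty, pow_zero, pow_one] at hH
      obtain ⟨B, hB, hBc⟩ := Finset.exists_subset_card_eq hH
      exact ⟨B, hB, hBc, fun x hx => absurd hx (Finset.notMem_empty x)⟩
  | cons x P hx ih =>
      rw [Finset.card_cons] at hH
      have h2 : n ^ 2 ^ (P.card + 1) = (n ^ 2 ^ P.card) ^ 2 := by
        rw [← pow_mul, pow_succ]
      rw [h2] at hH
      obtain ⟨T, hTH, hTc, hTm⟩ := erdos_szekeres (g x) H
        (fun u hu v hv huv => hg x u v huv) hH
      obtain ⟨B, hBT, hBc, hBm⟩ := ih T (le_of_eq hTc.symm)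
      refine ⟨B, hBT.trans hTH, hBc, ?_⟩
      intro y hy
      rcases Finset.mem_cons.1 hy with rfl | hy
      · exact hTm.subset hBT
      · exact hBm y hy



/-- An array on the subgrid `A` of `[N]^d` is inconsistently monotone if every
axis-parallel line within the subgrid is strictly monotone (directions may
differ from line to line). -/
def InconsMonoOn {d N : ℕ} (f : (Fin d → Fin N) → ℝ)
    (A : Fin d → Finset (Fin N)) : Prop :=
  ∀ i : Fin d, ∀ x : Fin d → Fin N, (∀ j, x j ∈ A j) →
    ((∀ u ∈ A i, ∀ v ∈ A i, u < v →
        f (Function.update x i u) < f (Function.update x i v)) ∨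
     (∀ u ∈ A i, ∀ v ∈ A i, u < v →
        f (Function.update x i v) < f (Function.update x i u)))

/-- `M' d n` is the least `N` such that every injective array on `[N]^d`
contains an inconsistently monotone `n × ⋯ × n` subarray. -/
noncomputable def M' (d n : ℕ) : ℕ :=
  sInf {N : ℕ | ∀ f : (Fin d → Fin N) → ℝ, Function.Injective f →
    ∃ A : Fin d → Finset (Fin N), (∀ i, (A i).card = n) ∧ InconsMonoOn f A}

/-- Inconsistent monotonicity of an array on `[m]^(d-1) × [N]` restricted to a
subgrid `A₁ × ⋯ × A_{d-1} × B`. -/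
def InconsMonoProdOn {e m N : ℕ} (f : (Fin e → Fin m) × Fin N → ℝ)
    (A : Fin e → Finset (Fin m)) (B : Finset (Fin N)) : Prop :=
  (∀ i : Fin e, ∀ x : Fin e → Fin m, (∀ j, x j ∈ A j) → ∀ h ∈ B,
    ((∀ u ∈ A i, ∀ v ∈ A i, u < v →
        f (Function.update x i u, h) < f (Function.update x i v, h)) ∨
     (∀ u ∈ A i, ∀ v ∈ A i, u < v →
        f (Function.update x i v, h) < f (Function.update x i u, h)))) ∧
  (∀ x : Fin e → Fin m, (∀ j, x j ∈ A j) →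
    ((∀ u ∈ B, ∀ v ∈ B, u < v → f (x, u) < f (x, v)) ∨
     (∀ u ∈ B, ∀ v ∈ B, u < v → f (x, v) < f (x, u))))

/- auxiliary -/
def GoodSet (e n : ℕ) : Set ℕ :=
  {N : ℕ | ∀ f : (Fin e → Fin N) → ℝ, Function.Injective f →
    ∃ A : Fin e → Finset (Fin N), (∀ i, (A i).card = n) ∧ InconsMonoOn f A}

lemma main_lemma {e m n N : ℕ} (he : 1 ≤ e)
    (Hm : ∀ g : (Fin e → Fin m) → ℝ, Function.Injective g →
      ∃ A : Fin e → Finset (Fin m), (∀ i, (A i).card = n) ∧ InconsMonoOn g A)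
    (hN : Nat.choose m n ^ e * n ^ 2 ^ n ^ e ≤ N)
    (f : (Fin e → Fin m) × Fin N → ℝ) (hf : Function.Injective f) :
    ∃ (A : Fin e → Finset (Fin m)) (B : Finset (Fin N)),
      (∀ i, (A i).card = n) ∧ B.card = n ∧ InconsMonoProdOn f A B := by
  classical
  -- n ≤ m
  have hnm : n ≤ m := by
    set g0 : (Fin e → Fin m) → ℝ := fun x => ((Fintype.equivFin (Fin e → Fin m)) x : ℕ) with hg0
    have hg0inj : Function.Injective g0 := by
      intro x y hxy
      apply (Fintype.equivFin (Fin e → Fin m)).injective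
      exact Fin.val_injective (Nat.cast_injective hxy)
    obtain ⟨A, hA, -⟩ := Hm g0 hg0inj
    calc n = (A ⟨0, he⟩).card := (hA _).symm
      _ ≤ Fintype.card (Fin m) := Finset.card_le_univ _
      _ = m := Fintype.card_fin m
  -- choose a subgrid for each layer
  have hslice : ∀ h : Fin N, Function.Injective (fun x => f (x, h)) := by
    intro h x y hxy
    have := hf hxy
    exact (Prod.mk.injEq _ _ _ _ ▸ this).1
  choose c hc1 hc2 using fun h : Fin N => Hm (fun x => f (x, h)) (hslice h)
  -- pigeonhole
  set t : Finset (Fin e → Finset (Fin m)) :=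
    Fintype.piFinset (fun _ : Fin e => (Finset.univ : Finset (Fin m)).powersetCard n) with ht
  have htc : t.card = Nat.choose m n ^ e := by
    rw [ht, Fintype.card_piFinset]
    simp [Finset.card_powersetCard]
  have htne : t.Nonempty := by
    rw [ht, Fintype.piFinset_nonempty]
    intro i
    exact Finset.powersetCard_nonempty.2 (by simpa using hnm)
  have hmaps : ∀ h ∈ (Finset.univ : Finset (Fin N)), c h ∈ t := by
    intro h _
    rw [ht, Fintype.mem_piFinset]
    intro i
    exact Finset.mem_powersetCard.2 ⟨Finset.subset_univ _, hc1 h i⟩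
  obtain ⟨A₀, hA₀t, hfib⟩ := Finset.exists_le_card_fiber_of_mul_le_card_of_maps_to
    hmaps htne (by rw [htc, Finset.card_univ, Fintype.card_fin]; exact hN)
  set H : Finset (Fin N) := Finset.univ.filter (fun h => c h = A₀) with hH
  have hA₀card : ∀ i, (A₀ i).card = n := by
    intro i
    rw [ht, Fintype.mem_piFinset] at hA₀t
    exact (Finset.mem_powersetCard.1 (hA₀t i)).2
  -- multi ES over grid points
  set P : Finset (Fin e → Fin m) := Fintype.piFinset A₀ with hP
  have hPcard : P.card = n ^ e := by
    rw [hP, Fintype.card_piFinset]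
    simp [hA₀card]
  obtain ⟨B, hBH, hBcard, hBmono⟩ := multi_es P (fun x h => f (x, h))
    (fun x u v huv hfe => huv (congrArg Prod.snd (hf hfe)))
    H (by rw [hPcard]; exact hfib)
  refine ⟨A₀, B, hA₀card, hBcard, ?_, ?_⟩
  · intro i x hxA h hhB
    have hhH := hBH hhB
    rw [hH, Finset.mem_filter] at hhH
    have hch := hhH.2
    have := hc2 h i x (by rw [hch]; exact hxA)
    rw [hch] at this
    exact this
  · intro x hxA
    have hxP : x ∈ P := by
      rw [hP, Fintype.mem_piFinset]; exact hxA
    exact hBmono x hxP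

lemma good_nonempty : ∀ e, 1 ≤ e → ∀ n, (GoodSet e n).Nonempty := by
  intro e he
  induction e, he using Nat.le_induction with
  | base =>
      intro n
      refine ⟨n ^ 2, ?_⟩
      intro f hf
      set g : Fin (n ^ 2) → ℝ := fun h => f (fun _ => h) with hg
      have hginj : Function.Injective g := by
        intro u v huv
        have := hf huv
        exact congrFun this 0
      obtain ⟨T, -, hTc, hTm⟩ := erdos_szekeres (a := n) g Finset.univ
        (fun u _ v _ huv => fun hgu => huv (hginj hgu))
        (by rw [Finset.card_univ, Fintype.card_fin])
      refine ⟨fun _ => T, fun _ => hTc, ?_⟩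
      intro i x hx
      have hupd : ∀ u : Fin (n ^ 2), Function.update x i u = fun _ => u := by
        intro u
        funext j
        have : j = i := Subsingleton.elim j i
        rw [this, Function.update_self]
      rcases hTm with hm | hm
      · left
        intro u hu v hv huv
        rw [hupd u, hupd v]
        exact hm u hu v hv huv
      · right
        intro u hu v hv huv
        rw [hupd u, hupd v]
        exact hm u hu v hv huv
  | succ e he ih =>
      intro n
      set m : ℕ := sInf (GoodSet e n) with hm
      have hmmem : m ∈ GoodSet e n := Nat.sInf_mem (ih n)
      set N₀ : ℕ := Nat.choose m n ^ e * n ^ 2 ^ n ^ e with hN₀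
      set N' : ℕ := max m N₀ with hN'
      refine ⟨N', ?_⟩
      intro g hg
      set em : Fin m → Fin N' := Fin.castLE (le_max_left _ _) with hem
      set eN : Fin N₀ → Fin N' := Fin.castLE (le_max_right _ _) with heN
      have heminj : Function.Injective em := Fin.castLE_injective _
      have heNinj : Function.Injective eN := Fin.castLE_injective _
      set F : (Fin e → Fin m) × Fin N₀ → ℝ :=
        fun p => g (Fin.snoc (fun j => em (p.1 j)) (eN p.2)) with hF
      have hFinj : Function.Injective F := by
        rintro ⟨x, h⟩ ⟨x', h'⟩ hxy
        have hsnoc := hg hxy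
        have hx : x = x' := by
          funext j
          have := congrFun hsnoc (Fin.castSucc j)
          rw [Fin.snoc_castSucc, Fin.snoc_castSucc] at this
          exact heminj this
        have hh : h = h' := by
          have := congrFun hsnoc (Fin.last e)
          rw [Fin.snoc_last, Fin.snoc_last] at this
          exact heNinj this
        rw [hx, hh]
      obtain ⟨A, B, hAc, hBc, hprod⟩ := main_lemma he hmmem (le_refl N₀) F hFinj
      set A' : Fin (e + 1) → Finset (Fin N') :=
        Fin.snoc (fun i => (A i).map ⟨em, heminj⟩) (B.map ⟨eN, heNinj⟩) with hA'
      have hA'last : A' (Fin.last e) = B.map ⟨eN, heNinj⟩ := by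
        rw [hA', Fin.snoc_last]
      have hA'cast : ∀ i : Fin e, A' (Fin.castSucc i) = (A i).map ⟨em, heminj⟩ := by
        intro i; rw [hA', Fin.snoc_castSucc]
      refine ⟨A', ?_, ?_⟩
      · intro i
        induction i using Fin.lastCases with
        | last => rw [hA'last, Finset.card_map]; exact hBc
        | cast i => rw [hA'cast, Finset.card_map]; exact hAc i
      · intro i x hx
        -- decode x
        have hdec : ∀ j : Fin e, ∃ a ∈ A j, em a = x (Fin.castSucc j) := by
          intro j
          have := hx (Fin.castSucc j)
          rw [hA'cast] at this
          obtain ⟨a, ha, hae⟩ := Finset.mem_map.1 this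
          exact ⟨a, ha, hae⟩
        choose x₀ hx₀A hx₀e using hdec
        have hlast := hx (Fin.last e)
        rw [hA'last] at hlast
        obtain ⟨h₀, hh₀B, hh₀e⟩ := Finset.mem_map.1 hlast
        have hxeq : x = Fin.snoc (fun j => em (x₀ j)) (eN h₀) := by
          funext j
          induction j using Fin.lastCases with
          | last => rw [Fin.snoc_last]; exact hh₀e.symm
          | cast j => rw [Fin.snoc_castSucc]; exact (hx₀e j).symm
        induction i using Fin.lastCases with
        | last =>
            have hmono := hprod.2 x₀ hx₀A
            have hval : ∀ u₀ : Fin N₀, g (Function.update x (Fin.last e) (eN u₀)) = F (x₀, u₀) := by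
              intro u₀
              simp only [hF]
              congr 1
              rw [hxeq]
              funext j
              induction j using Fin.lastCases with
              | last => rw [Function.update_self, Fin.snoc_last]
              | cast j =>
                  rw [Function.update_of_ne (Fin.castSucc_lt_last j).ne, Fin.snoc_castSucc,
                    Fin.snoc_castSucc]
            have hmem : ∀ u ∈ A' (Fin.last e), ∃ u₀ ∈ B, eN u₀ = u := by
              intro u hu
              rw [hA'last] at hu
              obtain ⟨u₀, hu₀, hue⟩ := Finset.mem_map.1 hu
              exact ⟨u₀, hu₀, hue⟩
            rcases hmono with hm | hm
            · left
              intro u hu v hv huv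
              obtain ⟨u₀, hu₀B, rfl⟩ := hmem u hu
              obtain ⟨v₀, hv₀B, rfl⟩ := hmem v hv
              rw [hval u₀, hval v₀]
              exact hm u₀ hu₀B v₀ hv₀B huv
            · right
              intro u hu v hv huv
              obtain ⟨u₀, hu₀B, rfl⟩ := hmem u hu
              obtain ⟨v₀, hv₀B, rfl⟩ := hmem v hv
              rw [hval u₀, hval v₀]
              exact hm u₀ hu₀B v₀ hv₀B huv
        | cast i =>
            have hmono := hprod.1 i x₀ hx₀A h₀ hh₀B
            have hval : ∀ u₀ : Fin m,
                g (Function.update x (Fin.castSucc i) (em u₀)) = F (Function.update x₀ i u₀, h₀) := by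
              intro u₀
              simp only [hF]
              congr 1
              rw [hxeq]
              funext j
              induction j using Fin.lastCases with
              | last =>
                  rw [Function.update_of_ne (Fin.castSucc_lt_last i).ne', Fin.snoc_last,
                    Fin.snoc_last]
              | cast j =>
                  rw [Fin.snoc_castSucc]
                  by_cases hji : j = i
                  · subst hji
                    rw [Function.update_self, Function.update_self]
                  · rw [Function.update_of_ne (fun hc => hji (Fin.castSucc_injective _ hc)),
                      Fin.snoc_castSucc, Function.update_of_ne hji]
            have hmem : ∀ u ∈ A' (Fin.castSucc i), ∃ u₀ ∈ A i, em u₀ = u := by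
              intro u hu
              rw [hA'cast] at hu
              obtain ⟨u₀, hu₀, hue⟩ := Finset.mem_map.1 hu
              exact ⟨u₀, hu₀, hue⟩
            rcases hmono with hm | hm
            · left
              intro u hu v hv huv
              obtain ⟨u₀, hu₀B, rfl⟩ := hmem u hu
              obtain ⟨v₀, hv₀B, rfl⟩ := hmem v hv
              rw [hval u₀, hval v₀]
              exact hm u₀ hu₀B v₀ hv₀B huv
            · right
              intro u hu v hv huv
              obtain ⟨u₀, hu₀B, rfl⟩ := hmem u hu
              obtain ⟨v₀, hv₀B, rfl⟩ := hmem v hv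
              rw [hval u₀, hval v₀]
              exact hm u₀ hu₀B v₀ hv₀B huv


/-- Recursion for the inconsistently monotone grid number: every injective
array indexed by `[m]^(d-1) × [N]`, with `m = M'_{d-1}(n)` and
`N = C(m,n)^(d-1)·n^(2^(n^(d-1)))`, contains an inconsistently monotone
`n × ⋯ × n` subarray; hence `M'_d(n) ≤ C(M'_{d-1}(n),n)^(d-1)·n^(2^(n^(d-1)))`. -/
theorem stmt_5 (d n : ℕ) (hd : 2 ≤ d)
    (m N : ℕ) (hm : m = M' (d - 1) n)
    (hN : N = Nat.choose m n ^ (d - 1) * n ^ 2 ^ n ^ (d - 1))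
    (f : (Fin (d - 1) → Fin m) × Fin N → ℝ) (hf : Function.Injective f) :
    ∃ (A : Fin (d - 1) → Finset (Fin m)) (B : Finset (Fin N)),
      (∀ i, (A i).card = n) ∧ B.card = n ∧ InconsMonoProdOn f A B := by
  have he : 1 ≤ d - 1 := by omega
  have hmmem : m ∈ GoodSet (d - 1) n := hm ▸ Nat.sInf_mem (good_nonempty (d - 1) he n)
  exact main_lemma he hmmem hN.ge f hf
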